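/- (Shnirel'man's basis theorem) Let A be a set of positive integers with Shnirel'man density σ(A) > 0. Then A is a basis for the nonnegative integers, i.e., there exists an integer h ≥ 1 such that hA = ℕ₀. -/

import Mathlib

open scoped Classical

/-- The Shnirel'man density of a set of positive integers:
`σ(A) = inf { A(n)/n : n ∈ ℕ, n ≥ 1 }` where `A(n) = #{a ∈ A : 1 ≤ a ≤ n}`. -/
noncomputable def shnirelmanDensity (A : Set ℕ) : ℝ :=
  sInf {r : ℝ | ∃ n : ℕ, 0 < n ∧ r = ((A ∩ Set.Icc 1 n).ncard : ℝ) / (n : ℝ)}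

/-- The `h`-fold sumset `hA = {a₁ + ⋯ + a_h : aᵢ ∈ A ∪ {0}}`. -/
def hfoldSumset (A : Set ℕ) (h : ℕ) : Set ℕ :=
  {n | ∃ f : Fin h → ℕ, (∀ i, f i ∈ A ∪ {0}) ∧ ∑ i, f i = n}

/-- The counting function `A(n) = #{a ∈ A : 1 ≤ a ≤ n}` as a Finset card. -/
noncomputable def scnt (S : Set ℕ) (n : ℕ) : ℕ :=
  ((Finset.Icc 1 n).filter (fun m => m ∈ S)).card

lemma scnt_le (S : Set ℕ) (n : ℕ) : scnt S n ≤ n := by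
  unfold scnt
  calc ((Finset.Icc 1 n).filter (fun m => m ∈ S)).card ≤ (Finset.Icc 1 n).card :=
        Finset.card_filter_le _ _
    _ = n := by simp

lemma scnt_mono {S T : Set ℕ} (hST : S ⊆ T) (n : ℕ) : scnt S n ≤ scnt T n := by
  unfold scnt
  exact Finset.card_le_card (Finset.filter_subset_filter _ (by exact fun x hx => hx) |>.trans
    (le_refl _)) |>.trans (Finset.card_le_card (Finset.monotone_filter_right _ (fun x _ hx => hST hx)))

lemma ncard_eq_scnt (A : Set ℕ) (n : ℕ) :
    (A ∩ Set.Icc 1 n).ncard = scnt A n := by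
  have : A ∩ Set.Icc 1 n = ↑((Finset.Icc 1 n).filter (fun m => m ∈ A)) := by
    ext m
    simp only [Set.mem_inter_iff, Set.mem_Icc, Finset.coe_filter, Finset.mem_Icc,
      Set.mem_setOf_eq]
    tauto
  rw [this, Set.ncard_coe_finset]
  rfl

lemma density_mul_le (A : Set ℕ) {n : ℕ} (hn : 0 < n) :
    shnirelmanDensity A * n ≤ scnt A n := by
  have hmem : ((scnt A n : ℝ) / n) ∈
      {r : ℝ | ∃ n : ℕ, 0 < n ∧ r = ((A ∩ Set.Icc 1 n).ncard : ℝ) / (n : ℝ)} :=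
    ⟨n, hn, by rw [ncard_eq_scnt]⟩
  have hbdd : BddBelow {r : ℝ | ∃ n : ℕ, 0 < n ∧ r = ((A ∩ Set.Icc 1 n).ncard : ℝ) / (n : ℝ)} := by
    refine ⟨0, ?_⟩
    rintro r ⟨m, hm, rfl⟩
    positivity
  have h := csInf_le hbdd hmem
  rw [le_div_iff₀ (by exact_mod_cast hn : (0:ℝ) < n)] at h
  exact h

lemma density_le_one (A : Set ℕ) : shnirelmanDensity A ≤ 1 := by
  have h := density_mul_le A (n := 1) one_pos
  have h2 : scnt A 1 ≤ 1 := scnt_le A 1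
  have : (scnt A 1 : ℝ) ≤ 1 := by exact_mod_cast h2
  simpa using h.trans this

lemma zero_mem_hfold (A : Set ℕ) (h : ℕ) : 0 ∈ hfoldSumset A h :=
  ⟨fun _ => 0, fun _ => Or.inr rfl, by simp⟩

lemma mem_hfold_one {A : Set ℕ} {a : ℕ} (ha : a ∈ A) : a ∈ hfoldSumset A 1 :=
  ⟨fun _ => a, fun _ => Or.inl ha, by simp⟩

lemma add_mem_hfold {A : Set ℕ} {h k x y : ℕ} (hx : x ∈ hfoldSumset A h)
    (hy : y ∈ hfoldSumset A k) : x + y ∈ hfoldSumset A (h + k) := by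
  obtain ⟨f, hf, rfl⟩ := hx
  obtain ⟨g, hg, rfl⟩ := hy
  refine ⟨Fin.append f g, ?_, ?_⟩
  · intro i
    refine Fin.addCases (fun j => ?_) (fun j => ?_) i
    · rw [Fin.append_left]; exact hf j
    · rw [Fin.append_right]; exact hg j
  · rw [Fin.sum_univ_add]
    simp [Fin.append_left, Fin.append_right]

lemma hfold_mono {A : Set ℕ} {h k : ℕ} : hfoldSumset A h ⊆ hfoldSumset A (h + k) := by
  intro x hx
  simpa using add_mem_hfold hx (zero_mem_hfold A k)

lemma scnt_split (S : Set ℕ) {a n : ℕ} (h1 : 1 ≤ a) (h2 : a ≤ n) :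
    scnt S n = scnt S (a - 1) + ((Finset.Icc a n).filter (fun m => m ∈ S)).card := by
  unfold scnt
  have hU : Finset.Icc 1 n = Finset.Icc 1 (a - 1) ∪ Finset.Icc a n := by
    ext m
    simp only [Finset.mem_Icc, Finset.mem_union]
    omega
  have hdisj : Disjoint ((Finset.Icc 1 (a - 1)).filter (fun m => m ∈ S))
      ((Finset.Icc a n).filter (fun m => m ∈ S)) := by
    rw [Finset.disjoint_left]
    intro m hm hm'
    simp only [Finset.mem_filter, Finset.mem_Icc] at hm hm'
    omega
  rw [hU, Finset.filter_union, Finset.card_union_of_disjoint hdisj]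

/-- Key counting lemma (Shnirel'man's gap argument, via strong induction). -/
lemma key_lemma (A B C : Set ℕ) (K : ℝ) (hK : 0 ≤ K)
    (hBC : B ⊆ C) (hAC : A ⊆ C)
    (hadd : ∀ a ∈ A, ∀ b ∈ B, a + b ∈ C)
    (hB : ∀ g : ℕ, (g : ℝ) - scnt B g ≤ K * g) :
    ∀ n : ℕ, (n : ℝ) - scnt C n ≤ K * ((n : ℝ) - scnt A n) := by
  intro n
  induction n using Nat.strong_induction_on with
  | _ n ih =>
  by_cases hF : ((Finset.Icc 1 n).filter (fun m => m ∈ A)).Nonempty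
  · set F := (Finset.Icc 1 n).filter (fun m => m ∈ A) with hFdef
    set a := F.max' hF with hadef
    have haF : a ∈ F := F.max'_mem hF
    have haIcc : 1 ≤ a ∧ a ≤ n := by
      have := (Finset.mem_filter.mp haF).1
      simpa [Finset.mem_Icc] using this
    have haA : a ∈ A := (Finset.mem_filter.mp haF).2
    have ha1 : 1 ≤ a := haIcc.1
    have han : a ≤ n := haIcc.2
    have hmax : ∀ m ∈ F, m ≤ a := fun m hm => F.le_max' m hm
    -- A-elements in [a, n] are exactly {a}
    have hAcount : (Finset.Icc a n).filter (fun m => m ∈ A) = {a} := by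
      ext m
      simp only [Finset.mem_filter, Finset.mem_Icc, Finset.mem_singleton]
      constructor
      · rintro ⟨⟨ham, hmn⟩, hmA⟩
        have hmF : m ∈ F := by
          rw [hFdef]
          simp only [Finset.mem_filter, Finset.mem_Icc]
          exact ⟨⟨by omega, hmn⟩, hmA⟩
        have := hmax m hmF
        omega
      · rintro rfl
        exact ⟨⟨le_refl _, han⟩, haA⟩
    have hAn : scnt A n = scnt A (a - 1) + 1 := by
      rw [scnt_split A ha1 han, hAcount]; simp
    -- C-elements in [a, n] include a and a + b for b ∈ B ∩ [1, n - a]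
    have hsub : insert a (((Finset.Icc 1 (n - a)).filter (fun m => m ∈ B)).image (a + ·)) ⊆
        (Finset.Icc a n).filter (fun m => m ∈ C) := by
      intro m hm
      simp only [Finset.mem_insert, Finset.mem_image, Finset.mem_filter, Finset.mem_Icc] at hm ⊢
      rcases hm with rfl | ⟨b, ⟨⟨hb1, hb2⟩, hbB⟩, rfl⟩
      · exact ⟨⟨le_refl _, han⟩, hAC haA⟩
      · exact ⟨⟨by omega, by omega⟩, hadd a haA b hbB⟩
    have hnotmem : a ∉ ((Finset.Icc 1 (n - a)).filter (fun m => m ∈ B)).image (a + ·) := by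
      simp only [Finset.mem_image, Finset.mem_filter, Finset.mem_Icc]
      rintro ⟨b, ⟨⟨hb1, _⟩, _⟩, hab⟩
      omega
    have hinj : Function.Injective (a + ·) := fun x y hxy => by simpa using hxy
    have hcard : scnt B (n - a) + 1 ≤ ((Finset.Icc a n).filter (fun m => m ∈ C)).card := by
      have h1 := Finset.card_le_card hsub
      rw [Finset.card_insert_of_notMem hnotmem, Finset.card_image_of_injective _ hinj] at h1
      unfold scnt
      omega
    have hCn : scnt C (a - 1) + (scnt B (n - a) + 1) ≤ scnt C n := by
      rw [scnt_split C ha1 han]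
      omega
    have iha := ih (a - 1) (by omega)
    have hBg := hB (n - a)
    have e1 : ((a - 1 : ℕ) : ℝ) = (a : ℝ) - 1 := by
      rw [Nat.cast_sub ha1]; simp
    have e2 : ((n - a : ℕ) : ℝ) = (n : ℝ) - a := by
      rw [Nat.cast_sub han]
    have hAn' : (scnt A n : ℝ) = (scnt A (a - 1) : ℝ) + 1 := by exact_mod_cast hAn
    have hCn' : (scnt C (a - 1) : ℝ) + ((scnt B (n - a) : ℝ) + 1) ≤ (scnt C n : ℝ) := by
      exact_mod_cast hCn
    have key2 : K * (((a - 1 : ℕ) : ℝ) - scnt A (a - 1)) + K * (((n - a : ℕ) : ℝ)) =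
        K * ((n : ℝ) - scnt A n) := by
      rw [e1, e2, hAn']; ring
    have esum : ((a - 1 : ℕ) : ℝ) + ((n - a : ℕ) : ℝ) = (n : ℝ) - 1 := by
      rw [e1, e2]; ring
    linarith [iha, hBg, hCn', key2, esum]
  · have hA0 : scnt A n = 0 := by
      unfold scnt
      rw [Finset.not_nonempty_iff_eq_empty] at hF
      rw [hF]; simp
    have hBCn : scnt B n ≤ scnt C n := scnt_mono hBC n
    have hBn := hB n
    have : (scnt B n : ℝ) ≤ (scnt C n : ℝ) := by exact_mod_cast hBCn
    rw [hA0]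
    push_cast
    linarith

/-- Shnirel'man's basis theorem: if `σ(A) > 0` then `A` is a basis for the
nonnegative integers, i.e., `hA = ℕ₀` for some `h ≥ 1`. -/
theorem shnirelman_basis_theorem
    (A : Set ℕ) (hA : A ⊆ {n | 0 < n}) (hpos : 0 < shnirelmanDensity A) :
    ∃ h : ℕ, 1 ≤ h ∧ hfoldSumset A h = Set.univ := by
  set α := shnirelmanDensity A with hα
  have hα1 : α ≤ 1 := density_le_one A
  have hAscnt : ∀ n : ℕ, (n : ℝ) - scnt A n ≤ (1 - α) * n := by
    intro n
    rcases Nat.eq_zero_or_pos n with rfl | hn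
    · simp [scnt]
    · have := density_mul_le A hn
      nlinarith
  -- pointwise density bound on h-fold sumsets
  have pointwise : ∀ h : ℕ, ∀ n : ℕ,
      (n : ℝ) - scnt (hfoldSumset A h) n ≤ (1 - α) ^ h * n := by
    intro h
    induction h with
    | zero =>
      intro n
      simp only [pow_zero, one_mul]
      have := scnt_le (hfoldSumset A 0) n
      have h0 : (0 : ℝ) ≤ (scnt (hfoldSumset A 0) n : ℝ) := by positivity
      linarith
    | succ h ihh =>
      have hKnn : (0 : ℝ) ≤ (1 - α) ^ h := pow_nonneg (by linarith) h
      have hBC : hfoldSumset A h ⊆ hfoldSumset A (h + 1) := hfold_mono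
      have hAC : A ⊆ hfoldSumset A (h + 1) := by
        intro a ha
        have : a ∈ hfoldSumset A (1 + h) := hfold_mono (mem_hfold_one ha)
        rwa [Nat.add_comm] at this
      have hadd : ∀ a ∈ A, ∀ b ∈ hfoldSumset A h, a + b ∈ hfoldSumset A (h + 1) := by
        intro a ha b hb
        have : a + b ∈ hfoldSumset A (1 + h) := add_mem_hfold (mem_hfold_one ha) hb
        rwa [Nat.add_comm] at this
      have hkey := key_lemma A (hfoldSumset A h) (hfoldSumset A (h + 1)) ((1 - α) ^ h)
        hKnn hBC hAC hadd ihh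
      intro n
      have h1 := hkey n
      have h2 := hAscnt n
      calc (n : ℝ) - scnt (hfoldSumset A (h + 1)) n
          ≤ (1 - α) ^ h * ((n : ℝ) - scnt A n) := h1
        _ ≤ (1 - α) ^ h * ((1 - α) * n) := by
            exact mul_le_mul_of_nonneg_left h2 hKnn
        _ = (1 - α) ^ (h + 1) * n := by ring
  -- choose h with (1-α)^h < 1/2
  obtain ⟨h, hh⟩ := exists_pow_lt_of_lt_one (by norm_num : (0:ℝ) < 1/2)
    (by linarith : (1 : ℝ) - α < 1)
  have hhne : h ≠ 0 := by
    intro h0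
    rw [h0, pow_zero] at hh
    norm_num at hh
  set B := hfoldSumset A h with hB
  -- B has more than n/2 elements in [1,n]
  have hcnt : ∀ n : ℕ, 0 < n → n < 2 * scnt B n := by
    intro n hn
    have h1 := pointwise h n
    have hn' : (0 : ℝ) < n := by exact_mod_cast hn
    have h2 : (1 - α) ^ h * n < (1/2) * n := by
      exact mul_lt_mul_of_pos_right hh hn'
    have h3 : (n : ℝ) - scnt B n < n / 2 := by
      calc (n : ℝ) - scnt B n ≤ (1 - α) ^ h * n := h1
        _ < (1/2) * n := h2
        _ = n / 2 := by ring
    have : (n : ℝ) < 2 * scnt B n := by linarith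
    exact_mod_cast this
  -- pigeonhole: every n is sum of two elements of B
  have pigeon : ∀ n : ℕ, ∃ x ∈ B, ∃ y ∈ B, x + y = n := by
    intro n
    rcases Nat.eq_zero_or_pos n with rfl | hn
    · exact ⟨0, zero_mem_hfold A h, 0, zero_mem_hfold A h, rfl⟩
    · set X := insert 0 ((Finset.Icc 1 n).filter (fun m => m ∈ B)) with hX
      set Y := X.image (n - ·) with hY
      have hXcard : X.card = scnt B n + 1 := by
        rw [hX, Finset.card_insert_of_notMem (by simp)]
        rfl
      have hXB : ∀ x ∈ X, x ∈ B ∧ x ≤ n := by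
        intro x hx
        rw [hX] at hx
        simp only [Finset.mem_insert, Finset.mem_filter, Finset.mem_Icc] at hx
        rcases hx with rfl | ⟨⟨_, h2⟩, h3⟩
        · exact ⟨zero_mem_hfold A h, Nat.zero_le n⟩
        · exact ⟨h3, h2⟩
      have hYcard : Y.card = X.card := by
        rw [hY]
        apply Finset.card_image_of_injOn
        intro x hx y hy hxy
        have hxy' : n - x = n - y := hxy
        have hx' := (hXB x hx).2
        have hy' := (hXB y hy).2
        omega
      have hXr : X ⊆ Finset.range (n + 1) := by
        intro x hx
        simp only [Finset.mem_range]
        exact Nat.lt_succ_of_le (hXB x hx).2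
      have hYr : Y ⊆ Finset.range (n + 1) := by
        intro y hy
        rw [hY] at hy
        simp only [Finset.mem_image] at hy
        obtain ⟨x, _, rfl⟩ := hy
        simp only [Finset.mem_range]
        omega
      have hunion : (X ∪ Y).card ≤ n + 1 := by
        calc (X ∪ Y).card ≤ (Finset.range (n + 1)).card :=
              Finset.card_le_card (Finset.union_subset hXr hYr)
          _ = n + 1 := Finset.card_range _
      have hicard := Finset.card_union_add_card_inter X Y
      have hlt := hcnt n hn
      have hint : 0 < (X ∩ Y).card := by omega
      obtain ⟨x, hx⟩ := Finset.card_pos.mp hint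
      rw [Finset.mem_inter] at hx
      obtain ⟨hxX, hxY⟩ := hx
      rw [hY] at hxY
      simp only [Finset.mem_image] at hxY
      obtain ⟨b, hbX, rfl⟩ := hxY
      have hb := hXB b hbX
      have hx' := hXB (n - b) hxX
      exact ⟨n - b, hx'.1, b, hb.1, by omega⟩
  refine ⟨h + h, by omega, ?_⟩
  apply Set.eq_univ_of_forall
  intro n
  obtain ⟨x, hx, y, hy, hxy⟩ := pigeon n
  have := add_mem_hfold hx hy
  rwa [hxy] at this
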